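/- Let γ ∈ (0, 1) and β ∈ (0, 1). The set S = {t ∈ ℕ, t ≥ 1 : γ^{t−1} ≥ (1 − β)/(1 − β^t)} is nonempty (it contains t = 1) and finite; let T̂ = max S. Then: (i) for every natural number t with 1 ≤ t ≤ T̂, (1 − β)/(1 − β^t) ≤ γ^{t−1}; and (ii) for every natural number t > T̂, (1 − β)/(1 − β^t) < γ^{T̂ − 1}. -/

import Mathlib

private lemma crossover_gpos {γ β : ℝ} (hγ0 : 0 < γ) (hβ0 : 0 < β) (hβ1 : β < 1) (n : ℕ) :
    0 < γ ^ n * (1 - β ^ (n + 1)) := by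
  have h : β ^ (n + 1) < 1 := pow_lt_one₀ hβ0.le hβ1 (Nat.succ_ne_zero n)
  exact mul_pos (pow_pos hγ0 n) (by linarith)

private lemma crossover_down {γ β : ℝ} (hγ0 : 0 < γ) (hγ1 : γ < 1) (hβ0 : 0 < β)
    (hβ1 : β < 1) (n : ℕ)
    (h : 1 - β ≤ γ ^ (n + 1) * (1 - β ^ (n + 2))) :
    1 - β ≤ γ ^ n * (1 - β ^ (n + 1)) := by
  by_contra hc
  push_neg at hc
  set g : ℕ → ℝ := fun m => γ ^ m * (1 - β ^ (m + 1)) with hg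
  have gpos : ∀ m, 0 < g m := crossover_gpos hγ0 hβ0 hβ1
  have hgn : g n < g (n + 1) := by
    show γ ^ n * (1 - β ^ (n + 1)) < γ ^ (n + 1) * (1 - β ^ (n + 1 + 1))
    have e : n + 1 + 1 = n + 2 := rfl
    rw [e]; linarith
  have step : ∀ u, u ≤ n → g u < g (u + 1) := by
    intro u hu
    have hpow : β ^ (n + 1) ≤ β ^ (u + 1) :=
      pow_le_pow_of_le_one hβ0.le hβ1.le (by omega)
    have hratio : (1 - β ^ (n + 2)) * (1 - β ^ (u + 1)) ≤
        (1 - β ^ (u + 2)) * (1 - β ^ (n + 1)) := by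
      have e1 : β ^ (u + 2) = β * β ^ (u + 1) := by ring
      have e2 : β ^ (n + 2) = β * β ^ (n + 1) := by ring
      rw [e1, e2]
      nlinarith [mul_nonneg (sub_nonneg.mpr hpow) (show (0:ℝ) ≤ 1 - β by linarith)]
    have hkey : g (n + 1) * g u ≤ g (u + 1) * g n := by
      have eL : g (n + 1) * g u = γ ^ (u + n + 1) * ((1 - β ^ (n + 2)) * (1 - β ^ (u + 1))) := by
        simp only [hg]; ring
      have eR : g (u + 1) * g n = γ ^ (u + n + 1) * ((1 - β ^ (u + 2)) * (1 - β ^ (n + 1))) := by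
        simp only [hg]; ring
      rw [eL, eR]
      exact mul_le_mul_of_nonneg_left hratio (pow_nonneg hγ0.le _)
    have h1 : g n * g u < g (n + 1) * g u := mul_lt_mul_of_pos_right hgn (gpos u)
    have h2 : g u * g n < g (u + 1) * g n := by
      calc g u * g n = g n * g u := by ring
        _ < g (n + 1) * g u := h1
        _ ≤ g (u + 1) * g n := hkey
    exact lt_of_mul_lt_mul_right h2 (gpos n).le
  have chain : ∀ u, u ≤ n → g 0 ≤ g u := by
    intro u
    induction u with
    | zero => intro _; exact le_rfl
    | succ k ih =>
      intro hk
      exact le_of_lt (lt_of_le_of_lt (ih (by omega)) (step k (by omega)))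
  have h0 : g 0 ≤ g n := chain n le_rfl
  have hg0 : g 0 = 1 - β := by simp [hg]
  have hgncalc : g n = γ ^ n * (1 - β ^ (n + 1)) := rfl
  rw [hg0] at h0
  rw [hgncalc] at h0
  linarith

private lemma crossover_down_iter {γ β : ℝ} (hγ0 : 0 < γ) (hγ1 : γ < 1) (hβ0 : 0 < β)
    (hβ1 : β < 1) (k n : ℕ)
    (h : 1 - β ≤ γ ^ (n + k) * (1 - β ^ (n + k + 1))) :
    1 - β ≤ γ ^ n * (1 - β ^ (n + 1)) := by
  induction k with
  | zero => exact h
  | succ m ih =>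
    apply ih
    apply crossover_down hγ0 hγ1 hβ0 hβ1
    have e : n + m + 1 = n + (m + 1) := by omega
    rw [e]
    have e2 : n + m + 2 = n + (m + 1) + 1 := by omega
    rw [e2]
    exact h

/-- **The crossover step `T̂` of the momentum normalization factor.**
For `γ, β ∈ (0,1)`, the set `S = {t ≥ 1 : γ^{t-1} ≥ (1-β)/(1-β^t)}` contains `1` and is
finite; for its maximum `T̂`: (i) `(1-β)/(1-β^t) ≤ γ^{t-1}` for all `1 ≤ t ≤ T̂`, and
(ii) `(1-β)/(1-β^t) < γ^{T̂-1}` for all `t > T̂`. -/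
theorem momentum_normalization_crossover
    (γ β : ℝ) (hγ0 : 0 < γ) (hγ1 : γ < 1) (hβ0 : 0 < β) (hβ1 : β < 1) :
    let S : Set ℕ := {t | 1 ≤ t ∧ (1 - β) / (1 - β ^ t) ≤ γ ^ (t - 1)}
    1 ∈ S ∧ S.Finite ∧
      ∃ That : ℕ, That ∈ S ∧ (∀ t ∈ S, t ≤ That) ∧
        (∀ t : ℕ, 1 ≤ t → t ≤ That → (1 - β) / (1 - β ^ t) ≤ γ ^ (t - 1)) ∧
        (∀ t : ℕ, That < t → (1 - β) / (1 - β ^ t) < γ ^ (That - 1)) := by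
  intro S
  have hβne : (1 : ℝ) - β ≠ 0 := by linarith
  have hden : ∀ t : ℕ, 1 ≤ t → 0 < 1 - β ^ t := by
    intro t ht
    have : β ^ t < 1 := pow_lt_one₀ hβ0.le hβ1 (by omega)
    linarith
  have hmem : ∀ t : ℕ, 1 ≤ t →
      ((1 - β) / (1 - β ^ t) ≤ γ ^ (t - 1) ↔ 1 - β ≤ γ ^ (t - 1) * (1 - β ^ t)) := by
    intro t ht
    exact div_le_iff₀ (hden t ht)
  -- 1 ∈ S
  have h1S : 1 ∈ S := by
    refine ⟨le_rfl, ?_⟩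
    simp [pow_one, div_self hβne]
  -- finiteness
  have hfin : S.Finite := by
    obtain ⟨N, hN⟩ := exists_pow_lt_of_lt_one (show (0:ℝ) < 1 - β by linarith) hγ1
    apply Set.Finite.subset (Set.finite_Iic (N + 1))
    intro t ht
    obtain ⟨ht1, ht2⟩ := ht
    by_contra hcon
    simp only [Set.mem_Iic, not_le] at hcon
    have hle : γ ^ (t - 1) ≤ γ ^ N :=
      pow_le_pow_of_le_one hγ0.le hγ1.le (by omega)
    have hlow : 1 - β ≤ (1 - β) / (1 - β ^ t) := by
      rw [le_div_iff₀ (hden t ht1)]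
      have hβt : 0 ≤ β ^ t := pow_nonneg hβ0.le t
      nlinarith
    linarith
  refine ⟨h1S, hfin, ?_⟩
  have hne : hfin.toFinset.Nonempty := ⟨1, hfin.mem_toFinset.mpr h1S⟩
  set That := hfin.toFinset.max' hne with hThat
  have hTS : That ∈ S := hfin.mem_toFinset.mp (hfin.toFinset.max'_mem hne)
  have hT1 : 1 ≤ That := hTS.1
  refine ⟨That, hTS, ?_, ?_, ?_⟩
  · intro t ht
    exact hfin.toFinset.le_max' t (hfin.mem_toFinset.mpr ht)
  · -- (i)
    intro t ht1 ht2
    rw [hmem t ht1]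
    have hTineq : 1 - β ≤ γ ^ ((t - 1) + (That - t)) * (1 - β ^ ((t - 1) + (That - t) + 1)) := by
      have h0 := (hmem That hT1).mp hTS.2
      have e : That - 1 = (t - 1) + (That - t) := by omega
      have e2 : That = (t - 1) + (That - t) + 1 := by omega
      rw [← e2, ← e]
      exact h0
    have := crossover_down_iter hγ0 hγ1 hβ0 hβ1 (That - t) (t - 1) hTineq
    have e3 : t - 1 + 1 = t := by omega
    rwa [e3] at this
  · -- (ii)
    intro t hTt
    have ht1 : 1 ≤ t := by omega
    have hβpow : β ^ t < β ^ That := pow_lt_pow_right_of_lt_one₀ hβ0 hβ1 hTt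
    have hdT : 0 < 1 - β ^ That := hden That hT1
    have hstrict : (1 - β) / (1 - β ^ t) < (1 - β) / (1 - β ^ That) :=
      div_lt_div_of_pos_left (by linarith) hdT (by linarith)
    exact lt_of_lt_of_le hstrict hTS.2
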